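/- Let $R = \mathbb{Z}[c_2,\dots,c_{2n}, y]/(2c_{odd},\; y\cdot c_{odd},\; y^2 + (-1)^n 2^{2n-2} c_{2n})$, where $c_{odd}$ ranges over the generators $c_i$ with $i$ odd. Then the element $y$ is not equal to $2r$ for any $r \in R$; that is, $y$ is not divisible by $2$ in $R$. -/

import Mathlib

noncomputable section
open MvPolynomial

/-- The defining ideal of `CH^*BSO(2n) = ℤ[c₂,…,c₂ₙ,y]/(2c_odd, y·c_odd, y² + (-1)ⁿ2^(2n-2)c₂ₙ)`.
The variable `some i` represents `c_{i+2}` and `none` represents `y`. -/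
def chowIdeal (n : ℕ) (hn : 1 ≤ n) : Ideal (MvPolynomial (Option (Fin (2 * n - 1))) ℤ) :=
  Ideal.span
    ({p | ∃ i : Fin (2 * n - 1), Odd (i.val + 2) ∧ p = 2 * X (some i)} ∪
     {p | ∃ i : Fin (2 * n - 1), Odd (i.val + 2) ∧ p = X none * X (some i)} ∪
     {X none ^ 2 + (-1 : MvPolynomial (Option (Fin (2 * n - 1))) ℤ) ^ n * 2 ^ (2 * n - 2) *
        X (some ⟨2 * n - 2, by omega⟩)})

/-- In `R = ℤ[c₂,…,c₂ₙ,y]/(2c_odd, y·c_odd, y² + (-1)ⁿ2^(2n-2)c₂ₙ)`, the class `y` is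
not divisible by `2`. -/
theorem y_not_divisible_by_two (n : ℕ) (hn : 1 ≤ n) :
    ¬ ∃ r : MvPolynomial (Option (Fin (2 * n - 1))) ℤ ⧸ chowIdeal n hn,
      Ideal.Quotient.mk (chowIdeal n hn) (X none) = 2 * r := by
  rintro ⟨r, hr⟩
  set φ : MvPolynomial (Option (Fin (2 * n - 1))) ℤ →+* DualNumber ℤ :=
    MvPolynomial.eval₂Hom (Int.castRingHom (DualNumber ℤ))
      (fun o => match o with | none => DualNumber.eps | some _ => 0) with hφ
  have hker : chowIdeal n hn ≤ RingHom.ker φ := by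
    rw [chowIdeal, Ideal.span_le]
    rintro p ((⟨i, hi, rfl⟩ | ⟨i, hi, rfl⟩) | hp)
    · simp [RingHom.mem_ker, hφ]
    · simp [RingHom.mem_ker, hφ]
    · simp only [Set.mem_singleton_iff] at hp
      subst hp
      simp [RingHom.mem_ker, hφ, DualNumber.eps_mul_eps, sq]
  set ψ := Ideal.Quotient.lift (chowIdeal n hn) φ (fun a ha => RingHom.mem_ker.mp (hker ha)) with hψ
  have h := congrArg ψ hr
  rw [map_mul, hψ, Ideal.Quotient.lift_mk] at h
  have heps : φ (X none) = DualNumber.eps := by simp [hφ]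
  rw [heps] at h
  have h2 : ψ (Ideal.Quotient.mk (chowIdeal n hn) 2) = 2 := by
    rw [hψ, Ideal.Quotient.lift_mk]; exact map_ofNat φ 2
  have hmk : ((2 : _) : MvPolynomial (Option (Fin (2 * n - 1))) ℤ ⧸ chowIdeal n hn)
      = Ideal.Quotient.mk (chowIdeal n hn) 2 := (map_ofNat _ 2).symm
  rw [hmk, h2, two_mul] at h
  have hs := congrArg TrivSqZeroExt.snd h
  simp only [TrivSqZeroExt.snd_add, DualNumber.snd_eps] at hs
  omega
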